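/- Let (M, d) be a metric space, Θ₀ ⊆ Θ ⊆ M with Θ permeable relative to (M, d) and Θ₀ closed in M. Then Θ \ Θ₀ is permeable relative to the metric subspace (M \ Θ₀, d). -/

import Mathlib

open Set MeasureTheory ENNReal

section Defs

variable {M : Type*} [MetricSpace M]

/-- `γ` is a path in `E` from `x` to `y` parametrized on `[a,b]`. -/
def IsPathIn (E : Set M) (γ : ℝ → M) (a b : ℝ) (x y : M) : Prop :=
  a ≤ b ∧ ContinuousOn γ (Set.Icc a b) ∧ γ a = x ∧ γ b = y ∧ ∀ t ∈ Set.Icc a b, γ t ∈ E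

/-- Length of a path: total variation over `[a,b]`. -/
noncomputable def pathLength (γ : ℝ → M) (a b : ℝ) : ℝ≥0∞ := eVariationOn γ (Set.Icc a b)

/-- Intrinsic metric on `E`: infimum of lengths of finite-length paths in `E`. -/
noncomputable def intrinsicDist (E : Set M) (x y : M) : ℝ≥0∞ :=
  sInf { L | ∃ γ a b, IsPathIn E γ a b x y ∧ pathLength γ a b < ⊤ ∧ pathLength γ a b = L }

/-- `Θ`-intrinsic metric relative to ambient set `N`: only paths whose intersection with `Θ`
has countable closure (closure taken in the subspace `N`) are allowed. -/
noncomputable def thetaDistIn (N Θ : Set M) (x y : M) : ℝ≥0∞ :=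
  sInf { L | ∃ γ a b, IsPathIn N γ a b x y ∧ pathLength γ a b < ⊤ ∧
    (closure (γ '' Set.Icc a b ∩ Θ) ∩ N).Countable ∧ pathLength γ a b = L }

/-- `Θ`-finite intrinsic metric relative to ambient set `N`: only paths meeting `Θ` in finitely
many points are allowed. -/
noncomputable def thetaFinDistIn (N Θ : Set M) (x y : M) : ℝ≥0∞ :=
  sInf { L | ∃ γ a b, IsPathIn N γ a b x y ∧ pathLength γ a b < ⊤ ∧
    (γ '' Set.Icc a b ∩ Θ).Finite ∧ pathLength γ a b = L }

/-- `Θ` is permeable relative to `N`. -/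
def PermeableIn (N Θ : Set M) : Prop :=
  ∀ x ∈ N, ∀ y ∈ N, thetaDistIn N Θ x y = intrinsicDist N x y

/-- `Θ` is finitely permeable relative to `N`. -/
def FinitelyPermeableIn (N Θ : Set M) : Prop :=
  ∀ x ∈ N, ∀ y ∈ N, thetaFinDistIn N Θ x y = intrinsicDist N x y

/-- `Θ` is permeable (relative to the whole space). -/
def Permeable (Θ : Set M) : Prop := PermeableIn Set.univ Θ

/-- `Θ` is finitely permeable (relative to the whole space). -/
def FinitelyPermeable (Θ : Set M) : Prop := FinitelyPermeableIn Set.univ Θ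

end Defs

section Aux
variable {X Y : Type*} [TopologicalSpace X] [TopologicalSpace Y]

lemma continuousOn_union_of_isClosed' {f : X → Y} {s t : Set X} (hs : IsClosed s)
    (ht : IsClosed t) (hfs : ContinuousOn f s) (hft : ContinuousOn f t) :
    ContinuousOn f (s ∪ t) := by
  intro x hx
  have h1 : ContinuousWithinAt f s x := by
    by_cases h : x ∈ s
    · exact hfs x h
    · exact continuousWithinAt_of_notMem_closure (by rwa [hs.closure_eq])
  have h2 : ContinuousWithinAt f t x := by
    by_cases h : x ∈ t
    · exact hft x h
    · exact continuousWithinAt_of_notMem_closure (by rwa [ht.closure_eq])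
  exact h1.union h2

variable {M : Type*} [MetricSpace M]

lemma evar_Icc_add_Icc (f : ℝ → M) {a b c : ℝ} (hab : a ≤ b) (hbc : b ≤ c) :
    eVariationOn f (Icc a b) + eVariationOn f (Icc b c) = eVariationOn f (Icc a c) := by
  have := eVariationOn.Icc_add_Icc f (s := univ) hab hbc (mem_univ b)
  simpa using this

lemma evar_telescope (f : ℝ → M) (w : ℕ → ℝ) (hw : Monotone w) (k : ℕ) :
    ∑ i ∈ Finset.range k, eVariationOn f (Icc (w i) (w (i+1)))
      = eVariationOn f (Icc (w 0) (w k)) := by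
  induction k with
  | zero => simp [eVariationOn.subsingleton f (by simp : (Icc (w 0) (w 0)).Subsingleton)]
  | succ n ih =>
      rw [Finset.sum_range_succ, ih, evar_Icc_add_Icc f (hw (Nat.zero_le n)) (hw (Nat.le_succ n))]

end Aux

section Aux2
variable {M : Type*} [MetricSpace M]

lemma path_concat {E : Set M} {γ₁ γ₂ : ℝ → M} {a b c d : ℝ} {x y z : M}
    (h₁ : IsPathIn E γ₁ a b x y) (h₂ : IsPathIn E γ₂ c d y z) :
    ∃ (γ : ℝ → M) (e : ℝ), IsPathIn E γ a e x z ∧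
      pathLength γ a e = pathLength γ₁ a b + pathLength γ₂ c d ∧
      γ '' Icc a e = γ₁ '' Icc a b ∪ γ₂ '' Icc c d := by
  obtain ⟨hab, hc1, hx1, hy1, hm1⟩ := h₁
  obtain ⟨hcd, hc2, hx2, hy2, hm2⟩ := h₂
  set e := b + (d - c) with he
  have hbe : b ≤ e := by rw [he]; linarith
  set τ : ℝ → ℝ := fun t => t - b + c with hτ
  set γ : ℝ → M := fun t => if t ≤ b then γ₁ t else γ₂ (τ t) with hγ
  have hIccsplit : Icc a e = Icc a b ∪ Icc b e := (Icc_union_Icc_eq_Icc hab hbe).symm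
  have hEq1 : EqOn γ γ₁ (Icc a b) := fun t ht => by simp [hγ, ht.2]
  have hτb : τ b = c := by rw [hτ]; ring_nf
  have hτe : τ e = d := by rw [hτ, he]; ring_nf
  have hEq2 : EqOn γ (γ₂ ∘ τ) (Icc b e) := by
    intro t ht
    by_cases h : t ≤ b
    · have hb : t = b := le_antisymm h ht.1
      simp only [hγ, hb, if_pos le_rfl, Function.comp_apply, hτb, hy1, hx2]
    · simp [hγ, h]
  have hτmaps : MapsTo τ (Icc b e) (Icc c d) := by
    intro t ht
    rw [mem_Icc] at ht ⊢
    rw [he] at ht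
    constructor
    · simp only [hτ]; linarith [ht.1]
    · simp only [hτ]; linarith [ht.2]
  have hτsurj : SurjOn τ (Icc b e) (Icc c d) := by
    intro u hu
    rw [mem_Icc] at hu
    refine ⟨u - c + b, ?_, by simp only [hτ]; ring⟩
    rw [mem_Icc, he]
    constructor
    · linarith [hu.1]
    · linarith [hu.2]
  have hτimg : τ '' Icc b e = Icc c d :=
    subset_antisymm (fun u ⟨t, ht, htu⟩ => htu ▸ hτmaps ht) hτsurj
  have hτcont : Continuous τ := by
    rw [hτ]; continuity
  have hcont : ContinuousOn γ (Icc a e) := by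
    rw [hIccsplit]
    exact continuousOn_union_of_isClosed' isClosed_Icc isClosed_Icc
      (hc1.congr hEq1) ((hc2.comp hτcont.continuousOn hτmaps).congr hEq2)
  have himg : γ '' Icc a e = γ₁ '' Icc a b ∪ γ₂ '' Icc c d := by
    rw [hIccsplit, image_union, hEq1.image_eq, hEq2.image_eq, image_comp, hτimg]
  have hγe : γ e = z := by
    have : γ e = γ₂ (τ e) := hEq2 ⟨hbe, le_rfl⟩
    rw [this, hτe, hy2]
  refine ⟨γ, e, ⟨hab.trans hbe, hcont, by simp [hγ, hab, hx1], hγe, ?_⟩, ?_, himg⟩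
  · intro t ht
    rw [hIccsplit] at ht
    rcases ht with ht | ht
    · rw [hEq1 ht]; exact hm1 t ht
    · rw [hEq2 ht]; exact hm2 _ (hτmaps ht)
  · have hsplit : pathLength γ a e = pathLength γ a b + pathLength γ b e := by
      unfold pathLength
      exact (evar_Icc_add_Icc γ hab hbe).symm
    rw [hsplit]
    congr 1
    · exact eVariationOn.eq_of_eqOn hEq1
    · unfold pathLength
      rw [eVariationOn.eq_of_eqOn hEq2, eVariationOn.comp_eq_of_monotoneOn γ₂ τ
        (fun u _ v _ huv => by simp only [hτ]; linarith), hτimg]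

end Aux2

section Aux3
variable {M : Type*} [MetricSpace M]

lemma fine_partition (γ : ℝ → M) {a b : ℝ} (hab : a ≤ b)
    (hV : eVariationOn γ (Icc a b) ≠ ⊤) {η : ℝ≥0∞} (hη : 0 < η) :
    ∃ (N : ℕ) (w : ℕ → ℝ), Monotone w ∧ w 0 = a ∧ w N = b ∧ (∀ i, w i ∈ Icc a b) ∧
      ∀ j < N, ∀ s t : ℝ, w j ≤ s → s ≤ t → t ≤ w (j+1) →
        eVariationOn γ (Icc s t) ≤ edist (γ t) (γ s) + η := by
  set V := eVariationOn γ (Icc a b) with hVdef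
  -- Part A : a partition nearly achieving the total variation
  obtain ⟨N, w, hmono, hw0, hwN, hmem, hsum⟩ :
      ∃ (N : ℕ) (w : ℕ → ℝ), Monotone w ∧ w 0 = a ∧ w N = b ∧ (∀ i, w i ∈ Icc a b) ∧
        V ≤ (∑ i ∈ Finset.range N, edist (γ (w (i+1))) (γ (w i))) + η := by
    by_cases hcase : V ≤ η
    · refine ⟨1, fun i => if i = 0 then a else b, ?_, by simp, by simp, ?_, ?_⟩
      · intro i j hij
        by_cases h : i = 0 <;> by_cases h' : j = 0 <;> simp [h, h', hab] <;> omega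
      · intro i; by_cases h : i = 0 <;> simp [h, hab, left_mem_Icc, right_mem_Icc]
      · exact hcase.trans le_add_self
    · push_neg at hcase
      have hV0 : V ≠ 0 := (hη.trans hcase).ne'
      have hlt : V - η < V := ENNReal.sub_lt_self hV hV0 hη.ne'
      rw [hVdef, eVariationOn, lt_iSup_iff] at hlt
      obtain ⟨⟨n, u, hu, humem⟩, hp⟩ := hlt
      set w : ℕ → ℝ := fun i => if i = 0 then a else if i ≤ n + 1 then u (i-1) else b with hw
      have hwmono : Monotone w := by
        apply monotone_nat_of_le_succ
        intro i
        rcases Nat.eq_zero_or_pos i with h0 | hpos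
        · subst h0
          have hw1 : w 1 = u 0 := by
            simp only [hw]; rw [if_neg one_ne_zero, if_pos (by omega)]
          have hw0' : w 0 = a := by simp [hw]
          rw [hw0', hw1]
          exact (humem 0).1
        · have hi : i ≠ 0 := hpos.ne'
          have hi1 : i + 1 ≠ 0 := by omega
          simp only [hw, if_neg hi, if_neg hi1]
          split_ifs with h1 h2 h3
          · exact hu (by omega)
          · exact (humem _).2
          · omega
          · exact le_rfl
      have hwmem : ∀ i, w i ∈ Icc a b := by
        intro i
        simp only [hw]
        split_ifs with h1 h2
        · exact left_mem_Icc.2 hab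
        · exact humem _
        · exact right_mem_Icc.2 hab
      refine ⟨n + 2, w, hwmono, by simp [hw], by simp [hw], hwmem, ?_⟩
      have hsum_le : (∑ i ∈ Finset.range n, edist (γ (u (i+1))) (γ (u i)))
          ≤ ∑ i ∈ Finset.range (n+2), edist (γ (w (i+1))) (γ (w i)) := by
        rw [Finset.sum_range_succ' (fun i => edist (γ (w (i+1))) (γ (w i))) (n+1),
          Finset.sum_range_succ]
        have heq : ∀ i < n, edist (γ (w (i+1+1))) (γ (w (i+1)))
            = edist (γ (u (i+1))) (γ (u i)) := by
          intro i hi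
          have h1 : w (i+1+1) = u (i+1) := by
            simp only [hw]; rw [if_neg (by omega), if_pos (by omega)]; congr 1
          have h2 : w (i+1) = u i := by
            simp only [hw]; rw [if_neg (by omega), if_pos (by omega)]; congr 1
          rw [h1, h2]
        calc (∑ i ∈ Finset.range n, edist (γ (u (i+1))) (γ (u i)))
            = ∑ i ∈ Finset.range n, edist (γ (w (i+1+1))) (γ (w (i+1))) :=
              (Finset.sum_congr rfl fun i hi => (heq i (Finset.mem_range.1 hi)).symm)
          _ ≤ _ := by
              refine le_add_of_le_of_nonneg (le_add_of_le_of_nonneg le_rfl zero_le) zero_le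
      have hVle : V < (∑ i ∈ Finset.range n, edist (γ (u (i+1))) (γ (u i))) + η := by
        rw [← ENNReal.sub_lt_iff_lt_right (by
            exact fun h => hV (top_le_iff.1 (h ▸ hcase.le) : V = ⊤) ) hcase.le]
        · exact hp
      exact le_trans hVle.le (add_le_add_left hsum_le η)
  -- Part B : each subinterval has variation close to the endpoint distance
  have hVj : ∀ j < N, eVariationOn γ (Icc (w j) (w (j+1)))
      ≤ edist (γ (w (j+1))) (γ (w j)) + η := by
    intro j hj
    have htel : ∑ i ∈ Finset.range N, eVariationOn γ (Icc (w i) (w (i+1))) = V := by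
      rw [evar_telescope γ w hmono N, hw0, hwN]
    have hdV : ∀ i, edist (γ (w (i+1))) (γ (w i)) ≤ eVariationOn γ (Icc (w i) (w (i+1))) :=
      fun i => eVariationOn.edist_le γ (right_mem_Icc.2 (hmono (Nat.le_succ i)))
        (left_mem_Icc.2 (hmono (Nat.le_succ i)))
    set d : ℕ → ℝ≥0∞ := fun i => edist (γ (w (i+1))) (γ (w i)) with hd
    set Vv : ℕ → ℝ≥0∞ := fun i => eVariationOn γ (Icc (w i) (w (i+1))) with hVv
    have hjmem : j ∈ Finset.range N := Finset.mem_range.2 hj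
    have h1 : Vv j + ∑ i ∈ (Finset.range N).erase j, d i ≤ V := by
      rw [← htel, ← Finset.add_sum_erase _ Vv hjmem]
      exact add_le_add_right (Finset.sum_le_sum fun i _ => hdV i) _
    have h2 : (∑ i ∈ Finset.range N, d i) = d j + ∑ i ∈ (Finset.range N).erase j, d i :=
      (Finset.add_sum_erase _ d hjmem).symm
    have hC : (∑ i ∈ (Finset.range N).erase j, d i) ≠ ⊤ :=
      (ENNReal.sum_lt_top.2 fun i _ => (edist_lt_top _ _)).ne
    have h3 : Vv j + ∑ i ∈ (Finset.range N).erase j, d i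
        ≤ (d j + η) + ∑ i ∈ (Finset.range N).erase j, d i := by
      calc Vv j + ∑ i ∈ (Finset.range N).erase j, d i ≤ V := h1
        _ ≤ (∑ i ∈ Finset.range N, d i) + η := hsum
        _ = (d j + η) + ∑ i ∈ (Finset.range N).erase j, d i := by rw [h2]; ring
    exact (ENNReal.add_le_add_iff_right hC).1 h3
  -- Part C : conclude
  refine ⟨N, w, hmono, hw0, hwN, hmem, ?_⟩
  intro j hj s t hjs hst htj
  have hwj1 : w j ≤ w (j+1) := hmono (Nat.le_succ j)
  have hsub : Icc (w j) (w (j+1)) ⊆ Icc a b := by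
    rw [← hw0, ← hwN]
    exact Icc_subset_Icc (hmono (Nat.zero_le j)) (hmono hj)
  have hVjfin : eVariationOn γ (Icc (w j) (w (j+1))) ≠ ⊤ :=
    fun h => hV (top_le_iff.1 (h ▸ eVariationOn.mono γ hsub))
  set A := eVariationOn γ (Icc (w j) s) with hA
  set B := eVariationOn γ (Icc s t) with hB
  set C := eVariationOn γ (Icc t (w (j+1))) with hCc
  have hABC : A + B + C = eVariationOn γ (Icc (w j) (w (j+1))) := by
    rw [hA, hB, hCc, evar_Icc_add_Icc γ hjs hst, evar_Icc_add_Icc γ (hjs.trans hst) htj]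
  have heA : edist (γ s) (γ (w j)) ≤ A :=
    eVariationOn.edist_le γ (right_mem_Icc.2 hjs) (left_mem_Icc.2 hjs)
  have heC : edist (γ (w (j+1))) (γ t) ≤ C :=
    eVariationOn.edist_le γ (right_mem_Icc.2 htj) (left_mem_Icc.2 htj)
  have htri : edist (γ (w (j+1))) (γ (w j))
      ≤ edist (γ (w (j+1))) (γ t) + edist (γ t) (γ s) + edist (γ s) (γ (w j)) :=
    edist_triangle4 _ _ _ _
  have hACfin : A + C ≠ ⊤ := by
    have hA' : A ≤ eVariationOn γ (Icc (w j) (w (j+1))) :=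
      eVariationOn.mono γ (Icc_subset_Icc le_rfl (hst.trans htj))
    have hC' : C ≤ eVariationOn γ (Icc (w j) (w (j+1))) :=
      eVariationOn.mono γ (Icc_subset_Icc (hjs.trans hst) le_rfl)
    exact (ENNReal.add_lt_top.2 ⟨hA'.trans_lt (lt_top_iff_ne_top.2 hVjfin),
      hC'.trans_lt (lt_top_iff_ne_top.2 hVjfin)⟩).ne
  have hmain : B + (A + C) ≤ (edist (γ t) (γ s) + η) + (A + C) := by
    calc B + (A + C) = A + B + C := by ring
      _ = eVariationOn γ (Icc (w j) (w (j+1))) := hABC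
      _ ≤ edist (γ (w (j+1))) (γ (w j)) + η := hVj j hj
      _ ≤ (edist (γ (w (j+1))) (γ t) + edist (γ t) (γ s) + edist (γ s) (γ (w j))) + η :=
          add_le_add_left htri η
      _ ≤ (C + edist (γ t) (γ s) + A) + η := by
          exact add_le_add_left (add_le_add (add_le_add_left heC _) heA) η
      _ = (edist (γ t) (γ s) + η) + (A + C) := by ring
  exact (ENNReal.add_le_add_iff_right hACfin).1 hmain

end Aux3


/-- If `Θ` is permeable relative to `M` and `Θ₀ ⊆ Θ` is closed, then `Θ \ Θ₀` is permeable
relative to the subspace `M \ Θ₀`. -/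
theorem stmt5 {M : Type*} [MetricSpace M] (Θ₀ Θ : Set M) (hsub : Θ₀ ⊆ Θ)
    (hΘ : Permeable Θ) (hΘ₀ : IsClosed Θ₀) :
    PermeableIn Θ₀ᶜ (Θ \ Θ₀) := by
  intro x hx y hy
  refine le_antisymm (le_sInf ?_) (sInf_le_sInf ?_)
  swap
  · rintro L ⟨γ, a, b, h1, h2, _, h4⟩
    exact ⟨γ, a, b, h1, h2, h4⟩
  rintro L ⟨γ, a, b, hpath, hfin, rfl⟩
  apply ENNReal.le_of_forall_pos_le_add
  intro ε hε hlt
  obtain ⟨hab, hcont, hγa, hγb, hmem⟩ := hpath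
  have hε' : (0:ℝ) < ε := hε
  -- the image is compact and at positive distance from Θ₀
  have hK : IsCompact (γ '' Icc a b) := isCompact_Icc.image_of_continuousOn hcont
  have hKsub : γ '' Icc a b ⊆ Θ₀ᶜ := by rintro _ ⟨t, ht, rfl⟩; exact hmem t ht
  obtain ⟨ρ, hρ, hthick⟩ := hK.exists_thickening_subset_open hΘ₀.isOpen_compl hKsub
  -- mesh from uniform continuity
  have huc := isCompact_Icc.uniformContinuousOn_of_continuous hcont
  rw [Metric.uniformContinuousOn_iff_le] at huc
  obtain ⟨μ, hμ, hmesh⟩ := huc (ρ/4) (by linarith)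
  -- budget rate
  set c₀ : ℝ := (ε : ℝ) / (b - a + 1) with hc0
  have hD1 : (0:ℝ) < b - a + 1 := by linarith
  have hc₀ : 0 < c₀ := div_pos hε' hD1
  -- fine partition
  obtain ⟨N, w, hmono, hw0, hwN, hwmem, hstep⟩ :=
    fine_partition γ hab hfin.ne (η := ENNReal.ofReal (ρ/4))
      (ENNReal.ofReal_pos.2 (by linarith))
  -- admissible connection predicate
  set Adm : ℝ → ℝ → Prop := fun s t => ∃ σ a' b', IsPathIn Θ₀ᶜ σ a' b' (γ s) (γ t) ∧
      (closure (σ '' Icc a' b' ∩ Θ)).Countable ∧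
      pathLength σ a' b' ≤ eVariationOn γ (Icc s t) + ENNReal.ofReal ((t - s) * c₀)
    with hAdm
  have hconst : ∀ s ∈ Icc a b, Adm s s := by
    intro s hs
    refine ⟨fun _ => γ s, 0, 0, ⟨le_rfl, continuousOn_const, rfl, rfl,
      fun _ _ => hmem s hs⟩, ?_, ?_⟩
    · refine (countable_singleton (γ s)).mono ?_
      calc closure ((fun _ => γ s) '' Icc (0:ℝ) 0 ∩ Θ)
          ⊆ closure {γ s} := closure_mono (by simp [Set.inter_subset_left])
        _ = {γ s} := closure_singleton
    · have h0 : pathLength (fun _ : ℝ => γ s) (0:ℝ) 0 = 0 := by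
        apply eVariationOn.constant_on
        rintro p ⟨_, _, rfl⟩ q ⟨_, _, rfl⟩
        rfl
      rw [h0]; exact zero_le
  have htrans : ∀ s m t : ℝ, s ≤ m → m ≤ t → Adm s m → Adm m t → Adm s t := by
    rintro s m t hsm hmt ⟨σ₁, a₁, b₁, hp₁, hcnt₁, hl₁⟩ ⟨σ₂, a₂, b₂, hp₂, hcnt₂, hl₂⟩
    obtain ⟨σ, e, hp, hlen, himg⟩ := path_concat hp₁ hp₂
    refine ⟨σ, a₁, e, hp, ?_, ?_⟩
    · rw [himg, union_inter_distrib_right, closure_union]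
      exact hcnt₁.union hcnt₂
    · rw [hlen, ← evar_Icc_add_Icc γ hsm hmt]
      calc pathLength σ₁ a₁ b₁ + pathLength σ₂ a₂ b₂
          ≤ (eVariationOn γ (Icc s m) + ENNReal.ofReal ((m - s) * c₀)) +
            (eVariationOn γ (Icc m t) + ENNReal.ofReal ((t - m) * c₀)) := add_le_add hl₁ hl₂
        _ = (eVariationOn γ (Icc s m) + eVariationOn γ (Icc m t)) +
            (ENNReal.ofReal ((m - s) * c₀) + ENNReal.ofReal ((t - m) * c₀)) := by ring
        _ = (eVariationOn γ (Icc s m) + eVariationOn γ (Icc m t)) +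
            ENNReal.ofReal ((t - s) * c₀) := by
            rw [← ENNReal.ofReal_add (by nlinarith [hc₀.le]) (by nlinarith [hc₀.le])]
            congr 1
            ring
  have hIccsub : ∀ j < N, Icc (w j) (w (j+1)) ⊆ Icc a b := by
    intro j hj
    rw [← hw0, ← hwN]
    exact Icc_subset_Icc (hmono (Nat.zero_le j)) (hmono hj)
  have helem : ∀ j < N, ∀ s t : ℝ, w j ≤ s → s ≤ t → t ≤ w (j+1) → t - s ≤ μ → Adm s t := by
    intro j hj s t hjs hst htj hts
    rcases eq_or_lt_of_le hst with rfl | hst'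
    · exact hconst s (hIccsub j hj ⟨hjs, hst.trans htj⟩)
    have hsI : s ∈ Icc a b := hIccsub j hj ⟨hjs, hst.trans htj⟩
    have htI : t ∈ Icc a b := hIccsub j hj ⟨hjs.trans hst, htj⟩
    have hVst_le : eVariationOn γ (Icc s t) ≤ pathLength γ a b :=
      eVariationOn.mono γ (Icc_subset_Icc hsI.1 htI.2)
    have hVfin : eVariationOn γ (Icc s t) ≠ ⊤ := (hVst_le.trans_lt hfin).ne
    have hintr : intrinsicDist univ (γ s) (γ t) ≤ eVariationOn γ (Icc s t) :=
      sInf_le ⟨γ, s, t, ⟨hst, hcont.mono (Icc_subset_Icc hsI.1 htI.2), rfl, rfl,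
        fun _ _ => mem_univ _⟩, hVst_le.trans_lt hfin, rfl⟩
    set bud := min (ENNReal.ofReal ((t - s) * c₀)) (ENNReal.ofReal (ρ/4)) with hbud
    have hbudpos : 0 < bud :=
      lt_min (ENNReal.ofReal_pos.2 (by nlinarith)) (ENNReal.ofReal_pos.2 (by linarith))
    have hltheta : thetaDistIn univ Θ (γ s) (γ t) < eVariationOn γ (Icc s t) + bud := by
      rw [hΘ (γ s) (mem_univ _) (γ t) (mem_univ _)]
      exact hintr.trans_lt (ENNReal.lt_add_right hVfin hbudpos.ne')
    rw [thetaDistIn, sInf_lt_iff] at hltheta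
    obtain ⟨L', ⟨σ, a', b', hσpath, hσfin, hσcnt, hσlen⟩, hL'⟩ := hltheta
    rw [inter_univ] at hσcnt
    -- length bounds
    have hedist : edist (γ t) (γ s) ≤ ENNReal.ofReal (ρ/4) := by
      rw [edist_dist]
      exact ENNReal.ofReal_le_ofReal (hmesh t htI s hsI (by
        rw [Real.dist_eq, abs_of_nonneg (by linarith)]; linarith))
    have hVst : eVariationOn γ (Icc s t) ≤ ENNReal.ofReal (ρ/4) + ENNReal.ofReal (ρ/4) :=
      (hstep j hj s t hjs hst htj).trans (add_le_add_left hedist _)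
    have hρbound : pathLength σ a' b' < ENNReal.ofReal ρ := by
      rw [hσlen]
      calc L' < eVariationOn γ (Icc s t) + bud := hL'
        _ ≤ (ENNReal.ofReal (ρ/4) + ENNReal.ofReal (ρ/4)) + ENNReal.ofReal (ρ/4) :=
            add_le_add hVst (min_le_right _ _)
        _ = ENNReal.ofReal (ρ/4 + ρ/4 + ρ/4) := by
            rw [ENNReal.ofReal_add (by linarith) (by linarith),
              ENNReal.ofReal_add (by linarith) (by linarith)]
        _ < ENNReal.ofReal ρ := (ENNReal.ofReal_lt_ofReal_iff hρ).2 (by linarith)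
    obtain ⟨ha'b', hσcont, hσa, hσb, _⟩ := hσpath
    have hσmem : ∀ t' ∈ Icc a' b', σ t' ∈ Θ₀ᶜ := by
      intro t' ht'
      apply hthick
      rw [Metric.mem_thickening_iff_infEdist_lt]
      calc EMetric.infEdist (σ t') (γ '' Icc a b)
          ≤ edist (σ t') (γ s) := EMetric.infEdist_le_edist_of_mem ⟨s, hsI, rfl⟩
        _ = edist (σ t') (σ a') := by rw [hσa]
        _ ≤ eVariationOn σ (Icc a' b') :=
            eVariationOn.edist_le σ ht' (left_mem_Icc.2 ha'b')
        _ < ENNReal.ofReal ρ := hρbound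
    refine ⟨σ, a', b', ⟨ha'b', hσcont, hσa, hσb, hσmem⟩, hσcnt, ?_⟩
    rw [hσlen]
    exact hL'.le.trans (add_le_add_right (min_le_left _ _) _)
  have hQ : ∀ n : ℕ, ∀ j < N, ∀ s t : ℝ, w j ≤ s → s ≤ t → t ≤ w (j+1) →
      t - s ≤ (n:ℝ) * μ → Adm s t := by
    intro n
    induction n with
    | zero => intro j hj s t hjs hst htj hts
              push_cast at hts
              exact helem j hj s t hjs hst htj (by linarith)
    | succ k ih =>
        intro j hj s t hjs hst htj hts
        by_cases hcase : t - s ≤ μ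
        · exact helem j hj s t hjs hst htj hcase
        · push_neg at hcase
          have hm1 : s ≤ s + μ := by linarith
          have hm2 : s + μ ≤ t := by linarith
          refine htrans s (s + μ) t hm1 hm2
            (helem j hj s (s + μ) hjs hm1 (hm2.trans htj) (by linarith))
            (ih j hj (s + μ) t (hjs.trans hm1) hm2 htj ?_)
          push_cast at hts
          linarith
  have hQJ : ∀ j < N, Adm (w j) (w (j+1)) := by
    intro j hj
    obtain ⟨n, hn⟩ := exists_nat_ge ((w (j+1) - w j) / μ)
    refine hQ n j hj (w j) (w (j+1)) le_rfl (hmono (Nat.le_succ j)) le_rfl ?_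
    rw [div_le_iff₀ hμ] at hn
    linarith
  have hR : ∀ j, j ≤ N → Adm a (w j) := by
    intro j
    induction j with
    | zero => intro _; rw [hw0]; exact hconst a (left_mem_Icc.2 hab)
    | succ k ih =>
        intro hk
        exact htrans a (w k) (w (k+1)) (hw0 ▸ hmono (Nat.zero_le k)) (hmono (Nat.le_succ k))
          (ih (by omega)) (hQJ k (by omega))
  have hfinal := hR N le_rfl
  rw [hwN] at hfinal
  obtain ⟨σ, a', b', hp, hcnt, hlen⟩ := hfinal
  rw [hγa, hγb] at hp
  -- bound the budget by ε
  have key : (b - a) * c₀ ≤ (ε:ℝ) := by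
    rw [hc0, mul_div_assoc']
    rw [div_le_iff₀ hD1]
    nlinarith [hε'.le]
  have hbudle : ENNReal.ofReal ((b - a) * c₀) ≤ (ε : ℝ≥0∞) := by
    calc ENNReal.ofReal ((b - a) * c₀) ≤ ENNReal.ofReal (ε:ℝ) := ENNReal.ofReal_le_ofReal key
      _ = (ε : ℝ≥0∞) := ENNReal.ofReal_coe_nnreal
  have hlen' : pathLength σ a' b' ≤ pathLength γ a b + ε :=
    hlen.trans (add_le_add_right hbudle _)
  have hσfin : pathLength σ a' b' < ⊤ :=
    hlen'.trans_lt (by exact ENNReal.add_lt_top.2 ⟨hfin, ENNReal.coe_lt_top⟩)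
  have hcntfinal : (closure (σ '' Icc a' b' ∩ (Θ \ Θ₀)) ∩ Θ₀ᶜ).Countable :=
    hcnt.mono fun p hp' => closure_mono (inter_subset_inter_right _ diff_subset) hp'.1
  exact le_trans (sInf_le ⟨σ, a', b', hp, hσfin, hcntfinal, rfl⟩) hlen'
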